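/- Let d ≥ 1 and let A_1, …, A_N be complex Hermitian d×d matrices. Then (A_1, …, A_N) has the phase retrieval property on ℂ^d if and only if there exist no nonzero vectors v, u ∈ ℂ^d with u ≠ icv for every real number c, such that Re(v*A_ju) = 0 for all 1 ≤ j ≤ N (where v* denotes the conjugate transpose of v). -/

import Mathlib

open Matrix

/-- A tuple of complex Hermitian `d×d` matrices has the phase retrieval property on `ℂ^d`
if equality of all quadratic measurements implies equality up to a unimodular constant. -/
def PhaseRetrievableC {d N : ℕ} (A : Fin N → Matrix (Fin d) (Fin d) ℂ) : Prop :=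
  ∀ x y : Fin d → ℂ,
    (∀ j, star x ⬝ᵥ (A j) *ᵥ x = star y ⬝ᵥ (A j) *ᵥ y) →
      ∃ b : ℂ, ‖b‖ = 1 ∧ x = b • y

lemma herm_swap {d : ℕ} {A : Matrix (Fin d) (Fin d) ℂ} (hA : A.IsHermitian)
    (x y : Fin d → ℂ) :
    star (star x ⬝ᵥ A *ᵥ y) = star y ⬝ᵥ A *ᵥ x := by
  rw [star_dotProduct, star_star, star_mulVec, hA.eq, ← dotProduct_mulVec]

lemma expand_dot {d : ℕ} (A : Matrix (Fin d) (Fin d) ℂ) (v u : Fin d → ℂ) :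
    star (v + u) ⬝ᵥ A *ᵥ (v + u) - star (v - u) ⬝ᵥ A *ᵥ (v - u)
      = 2 * (star v ⬝ᵥ A *ᵥ u) + 2 * (star u ⬝ᵥ A *ᵥ v) := by
  simp only [star_add, star_sub, mulVec_add, mulVec_sub, add_dotProduct, sub_dotProduct,
    dotProduct_add, dotProduct_sub]
  ring

lemma cross_sum {d : ℕ} {A : Matrix (Fin d) (Fin d) ℂ} (hA : A.IsHermitian)
    (v u : Fin d → ℂ) :
    star v ⬝ᵥ A *ᵥ u + star u ⬝ᵥ A *ᵥ v = 2 * ((star v ⬝ᵥ A *ᵥ u).re : ℂ) := by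
  have h2 : star u ⬝ᵥ A *ᵥ v = star (star v ⬝ᵥ A *ᵥ u) := (herm_swap hA v u).symm
  rw [h2, Complex.star_def, Complex.add_conj]
  push_cast; ring

theorem stmt_4 (d N : ℕ) (hd : 1 ≤ d) (A : Fin N → Matrix (Fin d) (Fin d) ℂ)
    (hA : ∀ j, (A j).IsHermitian) :
    PhaseRetrievableC A ↔
      ¬ ∃ v u : Fin d → ℂ, v ≠ 0 ∧ u ≠ 0 ∧
        (∀ c : ℝ, u ≠ (Complex.I * c) • v) ∧
        ∀ j, (star v ⬝ᵥ (A j) *ᵥ u).re = 0 := by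
  constructor
  · rintro hPR ⟨v, u, hv, hu, hc, hre⟩
    have hmeas : ∀ j, star (v + u) ⬝ᵥ (A j) *ᵥ (v + u) = star (v - u) ⬝ᵥ (A j) *ᵥ (v - u) := by
      intro j
      have h4 : star (v + u) ⬝ᵥ (A j) *ᵥ (v + u) - star (v - u) ⬝ᵥ (A j) *ᵥ (v - u) = 0 := by
        rw [expand_dot (A j) v u]
        have heq : (2 : ℂ) * (star v ⬝ᵥ (A j) *ᵥ u) + 2 * (star u ⬝ᵥ (A j) *ᵥ v)
            = 2 * (star v ⬝ᵥ (A j) *ᵥ u + star u ⬝ᵥ (A j) *ᵥ v) := by ring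
        rw [heq, cross_sum (hA j), hre j]
        simp
      exact sub_eq_zero.mp h4
    obtain ⟨b, hb, hxy⟩ := hPR (v + u) (v - u) hmeas
    have hb0 : b ≠ 0 := by
      intro h; rw [h] at hb; simp at hb
    have hnsq : Complex.normSq b = 1 := by
      rw [Complex.normSq_eq_norm_sq, hb]; norm_num
    have hbconj : (starRingEnd ℂ) b = b⁻¹ := by
      rw [Complex.inv_def, hnsq]; simp
    by_cases hb1 : b = 1
    · apply hu
      funext i
      have hi := congrFun hxy i
      simp only [hb1, one_smul, Pi.add_apply, Pi.sub_apply] at hi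
      show u i = 0
      linear_combination hi / 2
    by_cases hbm1 : b = -1
    · apply hv
      funext i
      have hi := congrFun hxy i
      simp only [hbm1, Pi.add_apply, Pi.sub_apply, Pi.smul_apply, smul_eq_mul] at hi
      show v i = 0
      linear_combination hi / 2
    · have hbp1 : b + 1 ≠ 0 := fun h => hbm1 (by linear_combination h)
      set z : ℂ := (b - 1) / (b + 1) with hz
      have hkey : (b + 1) • u = (b - 1) • v := by
        funext i
        have hi := congrFun hxy i
        simp only [Pi.add_apply, Pi.sub_apply, Pi.smul_apply, smul_eq_mul] at hi ⊢
        linear_combination hi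
      have huv : u = z • v := by
        funext i
        have hi := congrFun hkey i
        simp only [Pi.smul_apply, smul_eq_mul, hz] at hi ⊢
        field_simp
        linear_combination hi
      have hbinv1 : b⁻¹ + 1 ≠ 0 := by
        intro h
        apply hbp1
        have : (1 : ℂ) + b = 0 := by
          field_simp [hb0] at h
          linear_combination h
        linear_combination this
      have hbp1' : (1 : ℂ) + b ≠ 0 := fun h => hbp1 (by linear_combination h)
      have hzc : z + (starRingEnd ℂ) z = 0 := by
        rw [hz, map_div₀]
        simp only [map_sub, map_add, _root_.map_one, hbconj]
        field_simp
        ring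
      have hzim : z.re = 0 := by
        have h2 := congrArg Complex.re hzc
        simp only [Complex.add_re, Complex.conj_re, Complex.zero_re] at h2
        linarith
      apply hc z.im
      rw [huv]
      congr 1
      rw [Complex.ext_iff]
      constructor
      · simp [Complex.mul_re, hzim]
      · simp [Complex.mul_im]
  · intro h x y hxy
    set v := x + y with hv
    set u := x - y with hu
    have hre : ∀ j, (star v ⬝ᵥ (A j) *ᵥ u).re = 0 := by
      intro j
      have hexp : star v ⬝ᵥ (A j) *ᵥ u
          = star x ⬝ᵥ (A j) *ᵥ x - star x ⬝ᵥ (A j) *ᵥ y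
            + star y ⬝ᵥ (A j) *ᵥ x - star y ⬝ᵥ (A j) *ᵥ y := by
        rw [hv, hu]
        simp only [star_add, mulVec_sub, add_dotProduct, dotProduct_sub]
        ring
      have hsw : star y ⬝ᵥ (A j) *ᵥ x = star (star x ⬝ᵥ (A j) *ᵥ y) :=
        (herm_swap (hA j) x y).symm
      rw [hexp, hxy j, hsw, Complex.star_def]
      simp only [Complex.sub_re, Complex.add_re, Complex.conj_re]
      ring
    by_cases hvz : v = 0
    · refine ⟨-1, by simp, ?_⟩
      funext i
      have hi := congrFun hvz i
      simp only [hv, Pi.add_apply, Pi.zero_apply] at hi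
      simp only [Pi.smul_apply, smul_eq_mul]
      linear_combination hi
    by_cases huz : u = 0
    · refine ⟨1, by simp, ?_⟩
      funext i
      have hi := congrFun huz i
      simp only [hu, Pi.sub_apply, Pi.zero_apply] at hi
      simp only [Pi.smul_apply, smul_eq_mul, one_mul]
      linear_combination hi
    · have hnc : ¬ (∀ c : ℝ, u ≠ (Complex.I * c) • v) := by
        intro hc
        exact h ⟨v, u, hvz, huz, hc, hre⟩
      push_neg at hnc
      obtain ⟨c, hcu⟩ := hnc
      have h1 : (1 : ℂ) - Complex.I * c ≠ 0 := by
        intro hh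
        have h2 := congrArg Complex.re hh
        simp [Complex.sub_re, Complex.mul_re] at h2
      have h2 : (1 : ℂ) + Complex.I * c ≠ 0 := by
        intro hh
        have h3 := congrArg Complex.re hh
        simp [Complex.add_re, Complex.mul_re] at h3
      refine ⟨(1 + Complex.I * c) / (1 - Complex.I * c), ?_, ?_⟩
      · have hst : (1 : ℂ) - Complex.I * c = star (1 + Complex.I * c) := by
          simp [Complex.star_def, map_add, _root_.map_mul, Complex.conj_I, Complex.conj_ofReal]
          ring
        rw [norm_div, hst, norm_star, div_self (norm_ne_zero_iff.mpr h2)]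
      · funext i
        have hi := congrFun hcu i
        simp only [hu, hv, Pi.sub_apply, Pi.add_apply, Pi.smul_apply, smul_eq_mul] at hi ⊢
        field_simp
        linear_combination hi
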